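/- The wealth-dependent dynamic optimal risk sharing problem y_t((H^a_t)_{a∈𝔸}) = sup { Σ_{a∈𝔸} u_t(H^a_t,·)∘u_{t+1}(x^a_{t+1},·)∘…∘u_{T-1}(x^a_{T-1}, x^a_T) : Σ_{a∈𝔸} x^a_s = H_s, x^a_s ∈ L⁰_{s,++}, s = t+1,…,T } admits the optimal solution x^{a,*}_s = (H^a_t / H_t)·H_s for a ∈ 𝔸 and s = t+1,…,T; moreover the function y_t : L⁰_t((0,∞)^{|𝔸|}) → L̲⁰_t is 𝓕_t-stable, increasing and sequentially upper semi-continuous for t = 0,…,T. -/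

import Mathlib

open MeasureTheory Filter Topology Set

namespace CondPaper

variable {Ω : Type*}

/-- A countable partition of `Ω` (up to `μ`-null sets) into `G`-measurable sets. -/
def IsCondPartition {_ : MeasurableSpace Ω} (μ : Measure Ω) (G : MeasurableSpace Ω)
    (A : ℕ → Set Ω) : Prop :=
  (∀ k, MeasurableSet[G] (A k)) ∧
    (∀ i j, i ≠ j → μ (A i ∩ A j) = 0) ∧ μ (⋃ k, A k)ᶜ = 0

/-- A `G`-conditional metric on a nonempty set `X` (Definition 2.1 of the paper). -/
structure CondMetric {_ : MeasurableSpace Ω} (μ : Measure Ω) (G : MeasurableSpace Ω)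
    (X : Type*) : Type _ where
  d : X → X → Ω → ℝ
  measurable_d : ∀ x y, Measurable[G] (d x y)
  nonneg : ∀ x y, ∀ᵐ ω ∂μ, 0 ≤ d x y ω
  eq_iff : ∀ x y, (d x y =ᵐ[μ] fun _ => (0 : ℝ)) ↔ x = y
  symm : ∀ x y, d x y =ᵐ[μ] d y x
  triangle : ∀ x y z, ∀ᵐ ω ∂μ, d x z ω ≤ d x y ω + d y z ω
  concat_spec : ∀ (A : ℕ → Set Ω), IsCondPartition μ G A → ∀ x : ℕ → X,
    ∃! x₀ : X, ∀ k, ∀ᵐ ω ∂μ, ω ∈ A k → d x₀ (x k) ω = 0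

namespace CondMetric

variable {m : MeasurableSpace Ω} {μ : Measure Ω} {G : MeasurableSpace Ω} {X Z : Type*}

/-- The concatenation `Σₖ 1_{A k} (x k)` along a partition. -/
noncomputable def concat (D : CondMetric μ G X) (A : ℕ → Set Ω)
    (hA : IsCondPartition μ G A) (x : ℕ → X) : X :=
  (D.concat_spec A hA x).choose

/-- Almost sure convergence `x n → x₀` in a conditional metric space. -/
def TendstoAE (D : CondMetric μ G X) (x : ℕ → X) (x₀ : X) : Prop :=
  ∀ᵐ ω ∂μ, Tendsto (fun n => D.d x₀ (x n) ω) atTop (nhds (0 : ℝ))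

lemma isCondPartition_level {n : Ω → ℕ} (hn : Measurable[G] n) (μ : @Measure Ω m) :
    IsCondPartition μ G fun j => {ω | n ω = j} := by
  refine ⟨fun j => hn (MeasurableSet.singleton j), ?_, ?_⟩
  · intro i j hij
    have h : {ω | n ω = i} ∩ {ω | n ω = j} = (∅ : Set Ω) := by
      ext ω
      simp only [Set.mem_inter_iff, Set.mem_setOf_eq, Set.mem_empty_iff_false, iff_false]
      rintro ⟨h1, h2⟩
      exact hij (h1 ▸ h2 ▸ rfl)
    simp [h]
  · have h : (⋃ j, {ω | n ω = j}) = (Set.univ : Set Ω) := by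
      ext ω; simp
    simp [h]

/-- Given a `G`-measurable index `n : Ω → ℕ`, the element `x_{n}` of the
"measurable subsequence", i.e. the concatenation of `(x j)` along `({n = j})_j`. -/
noncomputable def subseq (D : CondMetric μ G X) (x : ℕ → X) (n : Ω → ℕ)
    (hn : Measurable[G] n) : X :=
  D.concat (fun j => {ω | n ω = j}) (isCondPartition_level hn μ) x

end CondMetric

variable {m : MeasurableSpace Ω} {μ : Measure Ω} {G : MeasurableSpace Ω} {X Z : Type*}

/-- A strictly increasing sequence `n₁ < n₂ < ⋯` of `G`-measurable `ℕ`-valued random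
variables (indexing a measurable subsequence). -/
structure MIdx {_ : MeasurableSpace Ω} (μ : Measure Ω) (G : MeasurableSpace Ω) where
  n : ℕ → Ω → ℕ
  meas : ∀ k, Measurable[G] (n k)
  lt : ∀ k, ∀ᵐ ω ∂μ, n k ω < n (k + 1) ω

/-- A `G`-stable subset: nonempty and closed under countable concatenations. -/
def StableSet (D : CondMetric μ G X) (H : Set X) : Prop :=
  H.Nonempty ∧ ∀ (A : ℕ → Set Ω) (hA : IsCondPartition μ G A) (x : ℕ → X),
    (∀ k, x k ∈ H) → D.concat A hA x ∈ H

/-- A sequentially closed subset of a conditional metric space. -/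
def SeqClosedSet (D : CondMetric μ G X) (H : Set X) : Prop :=
  ∀ (x : ℕ → X) (x₀ : X), (∀ k, x k ∈ H) → D.TendstoAE x x₀ → x₀ ∈ H

/-- Conditional sequential compactness: every sequence has a measurable
subsequence converging a.s. to an element of `K`. -/
def CondSeqCompact (D : CondMetric μ G X) (K : Set X) : Prop :=
  ∀ z : ℕ → X, (∀ k, z k ∈ K) →
    ∃ (N : MIdx μ G) (z₀ : X), z₀ ∈ K ∧
      D.TendstoAE (fun k => D.subseq z (N.n k) (N.meas k)) z₀

/-- Condition (c1): nonempty control sets. -/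
def ControlC1 (Θ : X → Set Z) : Prop := ∀ x, (Θ x).Nonempty

/-- Condition (c2): `𝓕ₜ`-stability of the state-dependent control set. -/
def ControlC2 (DX : CondMetric μ G X) (DZ : CondMetric μ G Z) (Θ : X → Set Z) : Prop :=
  ∀ (A : ℕ → Set Ω) (hA : IsCondPartition μ G A) (x : ℕ → X),
    Θ (DX.concat A hA x) =
      {w | ∃ z : ℕ → Z, (∀ k, z k ∈ Θ (x k)) ∧ w = DZ.concat A hA z}

/-- Condition (c3): conditional sequential compactness of each control set. -/
def ControlC3 (DZ : CondMetric μ G Z) (Θ : X → Set Z) : Prop :=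
  ∀ x, CondSeqCompact DZ (Θ x)

/-- Condition (c4): conditional outer semi-continuity of the control set. -/
def ControlC4 (DX : CondMetric μ G X) (DZ : CondMetric μ G Z) (Θ : X → Set Z) : Prop :=
  ∀ (x : ℕ → X) (x₀ : X), DX.TendstoAE x x₀ → ∀ z : ℕ → Z, (∀ n, z n ∈ Θ (x n)) →
    ∃ (N : MIdx μ G) (z' : ℕ → Z), (∀ k, z' k ∈ Θ x₀) ∧
      ∀ᵐ ω ∂μ, Tendsto
        (fun k => DZ.d (DZ.subseq z (N.n k) (N.meas k)) (z' k) ω) atTop (nhds (0 : ℝ))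

/-- Membership in `L̲⁰(G)`: a `G`-measurable random variable with values in `ℝ ∪ {-∞}`. -/
def InLbar {_ : MeasurableSpace Ω} (μ : Measure Ω) (G : MeasurableSpace Ω)
    (y : Ω → EReal) : Prop :=
  Measurable[G] y ∧ ∀ᵐ ω ∂μ, y ω < ⊤

end CondPaper

namespace CondPaper

variable {Ω ι : Type*}

/-- The recursively defined utility of an agent with wealth process `w · a`:
`shareVal g T w k a` is `u_{T-k}(w_{T-k} a, ·) ∘ ⋯ ∘ u_{T-1}(w_{T-1} a, w_T a)` where
`u_s(x,y) = x · g_s(y/x)` and `u_T = id`. -/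
noncomputable def shareVal (g : ℕ → (Ω → EReal) → Ω → EReal) (T : ℕ) (w : ℕ → ι → Ω → ℝ) :
    ℕ → ι → Ω → EReal
  | 0 => fun a ω => ((w T a ω : ℝ) : EReal)
  | k + 1 => fun a ω => ((w (T - (k + 1)) a ω : ℝ) : EReal) *
      g (T - (k + 1))
        (fun ω' => (((w (T - (k + 1)) a ω')⁻¹ : ℝ) : EReal) * shareVal g T w k a ω') ω

/-- A feasible allocation of the aggregate endowment `(H_s)` for times `s = t+1, …, T`:
positive, adapted, and summing to `H_s`. -/
def IsAlloc [Fintype ι] {_ : MeasurableSpace Ω} (μ : Measure Ω)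
    (F : ℕ → MeasurableSpace Ω) (T t : ℕ) (Hagg : ℕ → Ω → ℝ)
    (x : ℕ → ι → Ω → ℝ) : Prop :=
  ∀ s, t < s → s ≤ T →
    (∀ a, Measurable[F s] (x s a) ∧ ∀ᵐ ω ∂μ, 0 < x s a ω) ∧
    (fun ω => ∑ a, x s a ω) =ᵐ[μ] Hagg s


section AuxHelpers
variable {Ω : Type*}


lemma er_coe_mul_ne_top {r : ℝ} (hr : 0 ≤ r) {x : EReal} (hx : x ≠ ⊤) :
    (r : EReal) * x ≠ ⊤ := by
  rcases hr.lt_or_eq with h | h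
  · induction x with
    | bot => rw [EReal.coe_mul_bot_of_pos h]; exact bot_ne_top
    | coe y => rw [← EReal.coe_mul]; exact EReal.coe_ne_top _
    | top => exact absurd rfl hx
  · rw [← h, EReal.coe_zero, zero_mul]; simp

lemma er_coe_mul_add {r : ℝ} (hr : 0 ≤ r) (x y : EReal) :
    (r : EReal) * (x + y) = (r : EReal) * x + (r : EReal) * y := by
  rcases hr.lt_or_eq with h | h
  · induction x with
    | bot => simp [EReal.coe_mul_bot_of_pos h]
    | coe a =>
      induction y with
      | bot => simp [EReal.coe_mul_bot_of_pos h, ← EReal.coe_mul]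
      | coe b => rw [← EReal.coe_add, ← EReal.coe_mul, ← EReal.coe_mul, ← EReal.coe_mul,
          ← EReal.coe_add, mul_add]
      | top => simp [EReal.coe_mul_top_of_pos h, ← EReal.coe_mul]
    | top =>
      induction y with
      | bot => simp [EReal.coe_mul_bot_of_pos h, EReal.coe_mul_top_of_pos h]
      | coe b => rw [EReal.top_add_coe, EReal.coe_mul_top_of_pos h, ← EReal.coe_mul,
          EReal.top_add_coe]
      | top => simp [EReal.coe_mul_top_of_pos h]
  · rw [← h]; simp

lemma er_coe_sum_mul {ι : Type*} (s : Finset ι) (f : ι → ℝ) (hf : ∀ a ∈ s, 0 ≤ f a)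
    (x : EReal) :
    ((∑ a ∈ s, f a : ℝ) : EReal) * x = ∑ a ∈ s, ((f a : ℝ) : EReal) * x := by
  induction s using Finset.cons_induction with
  | empty => simp
  | cons a t ha ih =>
    rw [Finset.sum_cons, Finset.sum_cons, EReal.coe_add,
      EReal.right_distrib_of_nonneg (by exact_mod_cast hf a (Finset.mem_cons_self a t))
        (by exact_mod_cast Finset.sum_nonneg fun b hb => hf b (Finset.mem_cons_of_mem hb)),
      ih fun b hb => hf b (Finset.mem_cons_of_mem hb)]

lemma er_coe_finset_sum {ι : Type*} (s : Finset ι) (f : ι → ℝ) :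
    ((∑ a ∈ s, f a : ℝ) : EReal) = ∑ a ∈ s, ((f a : ℝ) : EReal) := by
  induction s using Finset.cons_induction with
  | empty => simp
  | cons a t ha ih => rw [Finset.sum_cons, Finset.sum_cons, EReal.coe_add, ih]



lemma er_measurable_coe_mul {G : MeasurableSpace Ω} {r : Ω → ℝ} {Z : Ω → EReal}
    (hr : Measurable[G] r) (hZ : Measurable[G] Z) :
    Measurable[G] fun ω => (r ω : EReal) * Z ω := by
  have heq : (fun ω => (r ω : EReal) * Z ω) = fun ω =>
      if Z ω = ⊥ then (if 0 < r ω then (⊥ : EReal) else if r ω < 0 then ⊤ else 0)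
      else if Z ω = ⊤ then (if 0 < r ω then (⊤ : EReal) else if r ω < 0 then ⊥ else 0)
      else ((r ω * (Z ω).toReal : ℝ) : EReal) := by
    funext ω
    by_cases hb : Z ω = ⊥
    · rw [hb, if_pos rfl]
      rcases lt_trichotomy 0 (r ω) with h | h | h
      · rw [if_pos h, EReal.coe_mul_bot_of_pos h]
      · rw [if_neg (by rw [← h]; exact lt_irrefl 0), if_neg (by rw [← h]; exact lt_irrefl 0),
          ← h, EReal.coe_zero, zero_mul]
      · rw [if_neg (not_lt.2 h.le), if_pos h, EReal.coe_mul_bot_of_neg h]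
    · rw [if_neg hb]
      by_cases ht : Z ω = ⊤
      · rw [ht, if_pos rfl]
        rcases lt_trichotomy 0 (r ω) with h | h | h
        · rw [if_pos h, EReal.coe_mul_top_of_pos h]
        · rw [if_neg (by rw [← h]; exact lt_irrefl 0), if_neg (by rw [← h]; exact lt_irrefl 0),
            ← h, EReal.coe_zero, zero_mul]
        · rw [if_neg (not_lt.2 h.le), if_pos h, EReal.coe_mul_top_of_neg h]
      · rw [if_neg ht, EReal.coe_mul, EReal.coe_toReal ht hb]
  rw [heq]
  have h1 : MeasurableSet[G] {ω | Z ω = ⊥} := hZ (measurableSet_singleton ⊥)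
  have h2 : MeasurableSet[G] {ω | Z ω = ⊤} := hZ (measurableSet_singleton ⊤)
  have h3 : MeasurableSet[G] {ω | 0 < r ω} := measurableSet_lt measurable_const hr
  have h4 : MeasurableSet[G] {ω | r ω < 0} := measurableSet_lt hr measurable_const
  exact Measurable.ite h1
    (Measurable.ite h3 measurable_const (Measurable.ite h4 measurable_const measurable_const))
    (Measurable.ite h2
      (Measurable.ite h3 measurable_const (Measurable.ite h4 measurable_const measurable_const))
      (measurable_coe_real_ereal.comp (hr.mul hZ.ereal_toReal)))

lemma er_measurable_add {G : MeasurableSpace Ω} {X Y : Ω → EReal}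
    (hX : Measurable[G] X) (hY : Measurable[G] Y) :
    Measurable[G] fun ω => X ω + Y ω := by
  have heq : (fun ω => X ω + Y ω) = fun ω =>
      if X ω = ⊥ then ⊥ else if Y ω = ⊥ then ⊥ else if X ω = ⊤ then ⊤ else if Y ω = ⊤ then ⊤
      else (((X ω).toReal + (Y ω).toReal : ℝ) : EReal) := by
    funext ω
    by_cases hxb : X ω = ⊥
    · rw [hxb, if_pos rfl]; exact EReal.bot_add _
    rw [if_neg hxb]
    by_cases hyb : Y ω = ⊥
    · rw [hyb, if_pos rfl]; exact EReal.add_bot _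
    rw [if_neg hyb]
    by_cases hxt : X ω = ⊤
    · rw [hxt, if_pos rfl, EReal.top_add_of_ne_bot hyb]
    rw [if_neg hxt]
    by_cases hyt : Y ω = ⊤
    · rw [hyt, if_pos rfl, EReal.add_top_of_ne_bot hxb]
    rw [if_neg hyt, EReal.coe_add, EReal.coe_toReal hxt hxb, EReal.coe_toReal hyt hyb]
  rw [heq]
  exact Measurable.ite (hX (measurableSet_singleton ⊥)) measurable_const
    (Measurable.ite (hY (measurableSet_singleton ⊥)) measurable_const
      (Measurable.ite (hX (measurableSet_singleton ⊤)) measurable_const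
        (Measurable.ite (hY (measurableSet_singleton ⊤)) measurable_const
          (measurable_coe_real_ereal.comp (hX.ereal_toReal.add hY.ereal_toReal)))))

lemma er_measurable_sum {G : MeasurableSpace Ω} {ι : Type*} (s : Finset ι) {Z : ι → Ω → EReal}
    (hZ : ∀ a ∈ s, Measurable[G] (Z a)) :
    Measurable[G] fun ω => ∑ a ∈ s, Z a ω := by
  induction s using Finset.cons_induction with
  | empty => simp only [Finset.sum_empty]; exact measurable_const
  | cons a t ha ih =>
    simp only [Finset.sum_cons]
    exact er_measurable_add (hZ a (Finset.mem_cons_self a t))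
      (ih fun b hb => hZ b (Finset.mem_cons_of_mem hb))



lemma er_tendsto_coe_mul {r : ℕ → ℝ} {r₀ : ℝ} (h : Tendsto r atTop (nhds r₀))
    (hp : ∀ k, 0 < r k) (h0 : 0 < r₀) {v : EReal} (hv : v ≠ ⊤) :
    Tendsto (fun k => (r k : EReal) * v) atTop (nhds ((r₀ : EReal) * v)) := by
  induction v with
  | bot =>
    have : (fun k => (r k : EReal) * ⊥) = fun _ => (⊥ : EReal) := by
      funext k; exact EReal.coe_mul_bot_of_pos (hp k)
    rw [this, EReal.coe_mul_bot_of_pos h0]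
    exact tendsto_const_nhds
  | coe x =>
    have : (fun k => (r k : EReal) * (x : EReal)) = fun k => ((r k * x : ℝ) : EReal) := by
      funext k; rw [EReal.coe_mul]
    rw [this, ← EReal.coe_mul]
    exact EReal.tendsto_coe.2 (h.mul_const x)
  | top => exact absurd rfl hv

lemma er_limsup_coe_mul_le {a : ℕ → ℝ} {a₀ : ℝ} (ha : Tendsto a atTop (nhds a₀))
    (h0 : 0 < a₀) (hpos : ∀ k, 0 < a k) {u : ℕ → EReal} {L : EReal}
    (hL : limsup u atTop ≤ L) :
    limsup (fun k => (a k : EReal) * u k) atTop ≤ (a₀ : EReal) * L := by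
  have key : ∀ c : ℝ, L < (c : EReal) →
      limsup (fun k => (a k : EReal) * u k) atTop ≤ ((a₀ * c : ℝ) : EReal) := by
    intro c hc
    have hev : ∀ᶠ k in atTop, u k < (c : EReal) :=
      eventually_lt_of_limsup_lt (lt_of_le_of_lt hL hc)
    have hev2 : ∀ᶠ k in atTop, (a k : EReal) * u k ≤ (a k : EReal) * (c : EReal) :=
      hev.mono fun k hk => mul_le_mul_of_nonneg_left hk.le (by exact_mod_cast (hpos k).le)
    calc limsup (fun k => (a k : EReal) * u k) atTop
        ≤ limsup (fun k => (a k : EReal) * (c : EReal)) atTop := limsup_le_limsup hev2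
      _ = ((a₀ * c : ℝ) : EReal) := by
          refine Tendsto.limsup_eq ?_
          have : (fun k => (a k : EReal) * (c : EReal)) = fun k => ((a k * c : ℝ) : EReal) := by
            funext k; rw [EReal.coe_mul]
          rw [this]
          exact EReal.tendsto_coe.2 (ha.mul_const c)
  induction L with
  | bot =>
    by_contra hcon
    rw [not_le] at hcon
    have hb : (⊥ : EReal) < limsup (fun k => (a k : EReal) * u k) atTop := by
      rwa [EReal.coe_mul_bot_of_pos h0] at hcon
    obtain ⟨M, _, hM⟩ := EReal.exists_between_coe_real hb
    have := key ((M - 1) / a₀) (EReal.bot_lt_coe _)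
    rw [mul_div_cancel₀ _ (ne_of_gt h0)] at this
    have h2 : limsup (fun k => (a k : EReal) * u k) atTop < (M : EReal) :=
      lt_of_le_of_lt this (by exact_mod_cast sub_one_lt M)
    exact absurd hM (not_lt.2 h2.le)
  | coe l =>
    have htd : Tendsto (fun n : ℕ => ((a₀ * (l + 1 / ((n : ℝ) + 1)) : ℝ) : EReal)) atTop
        (nhds ((a₀ : EReal) * (l : EReal))) := by
      rw [show ((a₀ : EReal) * (l : EReal)) = ((a₀ * l : ℝ) : EReal) by rw [EReal.coe_mul]]
      refine EReal.tendsto_coe.2 ?_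
      have h1 : Tendsto (fun n : ℕ => l + 1 / ((n : ℝ) + 1)) atTop (nhds l) := by
        have : Tendsto (fun n : ℕ => 1 / ((n : ℝ) + 1)) atTop (nhds 0) :=
          tendsto_one_div_add_atTop_nhds_zero_nat
        simpa using tendsto_const_nhds.add this
      simpa using (h1.const_mul a₀)
    refine ge_of_tendsto' htd fun n => ?_
    exact key (l + 1 / ((n : ℝ) + 1))
      (by exact_mod_cast lt_add_of_pos_right l (by positivity : (0:ℝ) < 1 / ((n : ℝ) + 1)))
  | top =>
    rw [EReal.coe_mul_top_of_pos h0]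
    exact le_top


lemma er_coe_mul_ne_top' {r : ℝ} (hr : 0 ≤ r) {x : EReal} (hx : x ≠ ⊤) :
    (r : EReal) * x ≠ ⊤ := by
  rcases hr.lt_or_eq with h | h
  · induction x with
    | bot => rw [EReal.coe_mul_bot_of_pos h]; exact bot_ne_top
    | coe y => rw [← EReal.coe_mul]; exact EReal.coe_ne_top _
    | top => exact absurd rfl hx
  · rw [← h, EReal.coe_zero, zero_mul]; simp

lemma shareVal_inLbar {ι : Type*} {m : MeasurableSpace Ω} {μ : Measure Ω}
    {F : ℕ → MeasurableSpace Ω} (hFmono : Monotone F)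
    {T : ℕ} {g : ℕ → (Ω → EReal) → Ω → EReal}
    (hgL : ∀ t < T, ∀ y : Ω → EReal, InLbar μ (F (t + 1)) y →
      Measurable[F t] (g t y) ∧ ∀ᵐ ω ∂μ, g t y ω < ⊤)
    (w : ℕ → ι → Ω → ℝ) (a : ι) :
    ∀ k, k ≤ T →
      (∀ s, T - k ≤ s → s ≤ T → Measurable[F s] (w s a) ∧ ∀ᵐ ω ∂μ, 0 < w s a ω) →
      InLbar μ (F (T - k)) (shareVal g T w k a) := by
  intro k
  induction k with
  | zero =>
    intro _ hw
    refine ⟨measurable_coe_real_ereal.comp (hw T (by omega) le_rfl).1, ?_⟩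
    filter_upwards [] with ω
    exact EReal.coe_lt_top _
  | succ k ih =>
    intro hk hw
    have hk' : k ≤ T := by omega
    have hTk : T - k = (T - (k + 1)) + 1 := by omega
    have hsT : T - (k + 1) < T := by omega
    have ihh := ih hk' fun s' h1 h2 => hw s' (by omega) h2
    rw [hTk] at ihh
    have hws := hw (T - (k + 1)) (by omega) (by omega)
    have hinner : InLbar μ (F (T - (k + 1) + 1))
        fun ω' => (((w (T - (k + 1)) a ω')⁻¹ : ℝ) : EReal) * shareVal g T w k a ω' := by
      refine ⟨er_measurable_coe_mul
        ((hws.1.inv).mono (hFmono (Nat.le_succ _)) le_rfl) ihh.1, ?_⟩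
      filter_upwards [ihh.2, hws.2] with ω h1 h2
      exact lt_top_iff_ne_top.2 (er_coe_mul_ne_top' (inv_nonneg.2 h2.le) h1.ne)
    have hg := hgL _ hsT _ hinner
    refine ⟨?_, ?_⟩
    · show Measurable[F (T - (k + 1))] fun ω => ((w (T - (k + 1)) a ω : ℝ) : EReal) *
        g (T - (k + 1))
          (fun ω' => (((w (T - (k + 1)) a ω')⁻¹ : ℝ) : EReal) * shareVal g T w k a ω') ω
      exact er_measurable_coe_mul hws.1 hg.1
    · have h2 : ∀ᵐ ω ∂μ, shareVal g T w (k + 1) a ω < ⊤ := by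
        filter_upwards [hg.2, hws.2] with ω h1 h2
        show ((w (T - (k + 1)) a ω : ℝ) : EReal) * _ < ⊤
        exact lt_top_iff_ne_top.2 (er_coe_mul_ne_top' h2.le h1.ne)
      exact h2

end AuxHelpers
section Aux2
variable {Ω : Type*} {m : MeasurableSpace Ω} {μ : MeasureTheory.Measure Ω}

lemma ae_finset {ι : Type*} (A : Finset ι) (P : ι → Ω → Prop)
    (h : ∀ a ∈ A, ∀ᵐ ω ∂μ, P a ω) : ∀ᵐ ω ∂μ, ∀ a ∈ A, P a ω := by
  induction A using Finset.cons_induction with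
  | empty =>
    filter_upwards [] with ω a ha
    exact absurd ha (Finset.notMem_empty a)
  | cons b t hb ih =>
    filter_upwards [h b (Finset.mem_cons_self b t),
      ih fun a ha => h a (Finset.mem_cons_of_mem ha)] with ω h1 h2 a ha
    rcases Finset.mem_cons.1 ha with rfl | ha'
    exacts [h1, h2 a ha']

lemma er_finset_sum_lt_top {ι : Type*} (A : Finset ι) (f : ι → EReal)
    (h : ∀ a ∈ A, f a < ⊤) : ∑ a ∈ A, f a < ⊤ := by
  induction A using Finset.cons_induction with
  | empty => simp
  | cons b t hb ih =>
    rw [Finset.sum_cons]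
    exact EReal.add_lt_top (h b (Finset.mem_cons_self b t)).ne
      (ih fun a ha => h a (Finset.mem_cons_of_mem ha)).ne

lemma shareVal_prop_eq {ι : Type*} {T : ℕ} {g : ℕ → (Ω → EReal) → Ω → EReal}
    (hgae : ∀ t < T, ∀ y y' : Ω → EReal, y =ᵐ[μ] y' → g t y =ᵐ[μ] g t y')
    (w w' : ℕ → ι → Ω → ℝ) (c : Ω → ℝ) (hc : ∀ᵐ ω ∂μ, 0 < c ω) (a a' : ι) :
    ∀ k, k ≤ T →
      (∀ s, T - k ≤ s → s ≤ T →
        (∀ᵐ ω ∂μ, 0 < w' s a' ω) ∧ (w s a =ᵐ[μ] fun ω => c ω * w' s a' ω)) →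
      shareVal g T w k a =ᵐ[μ] fun ω => (c ω : EReal) * shareVal g T w' k a' ω := by
  intro k
  induction k with
  | zero =>
    intro _ hw
    filter_upwards [(hw T (by omega) le_rfl).2] with ω h
    show ((w T a ω : ℝ) : EReal) = (c ω : EReal) * ((w' T a' ω : ℝ) : EReal)
    rw [h, EReal.coe_mul]
  | succ k ih =>
    intro hk hw
    have hk' : k ≤ T := by omega
    have hsT : T - (k + 1) < T := by omega
    have ihh := ih hk' fun s h1 h2 => hw s (by omega) h2
    have hws := hw (T - (k + 1)) (by omega) (by omega)
    -- inner arguments agree a.e.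
    have harg : (fun ω' => (((w (T - (k + 1)) a ω')⁻¹ : ℝ) : EReal) * shareVal g T w k a ω')
        =ᵐ[μ] fun ω' => (((w' (T - (k + 1)) a' ω')⁻¹ : ℝ) : EReal) *
          shareVal g T w' k a' ω' := by
      filter_upwards [ihh, hws.1, hws.2, hc] with ω h1 h2 h3 h4
      rw [h1, h3, ← mul_assoc, ← EReal.coe_mul,
        mul_inv_rev, mul_assoc, inv_mul_cancel₀ h4.ne', mul_one]
    have hgeq := hgae _ hsT _ _ harg
    filter_upwards [hgeq, hws.2, hws.1] with ω h1 h2 h3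
    show ((w (T - (k + 1)) a ω : ℝ) : EReal) * _ =
      (c ω : EReal) * (((w' (T - (k + 1)) a' ω : ℝ) : EReal) * _)
    rw [h1, h2, EReal.coe_mul, mul_assoc]

end Aux2
section Aux3
variable {Ω : Type*} {m : MeasurableSpace Ω} {μ : MeasureTheory.Measure Ω}

lemma jensen_pair {F : ℕ → MeasurableSpace Ω} (hFmono : Monotone F)
    {T : ℕ} {g : ℕ → (Ω → EReal) → Ω → EReal}
    (hgae : ∀ t < T, ∀ y y' : Ω → EReal, y =ᵐ[μ] y' → g t y =ᵐ[μ] g t y')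
    (hgconc : ∀ t < T, ∀ y y' : Ω → EReal, InLbar μ (F (t + 1)) y →
      InLbar μ (F (t + 1)) y' →
      ∀ lam : Ω → ℝ, Measurable[F t] lam → (∀ᵐ ω ∂μ, 0 ≤ lam ω ∧ lam ω ≤ 1) →
      ∀ᵐ ω ∂μ, (lam ω : EReal) * g t y ω + ((1 - lam ω : ℝ) : EReal) * g t y' ω ≤
        g t (fun ω' => (lam ω' : EReal) * y ω' +
          ((1 - lam ω' : ℝ) : EReal) * y' ω') ω)
    {s : ℕ} (hsT : s < T) (pb q : Ω → ℝ) (Zb Q : Ω → EReal)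
    (hpb : Measurable[F s] pb) (hpbp : ∀ᵐ ω ∂μ, 0 < pb ω)
    (hq : Measurable[F s] q) (hqp : ∀ᵐ ω ∂μ, 0 < q ω)
    (hZb : InLbar μ (F (s + 1)) Zb) (hQ : InLbar μ (F (s + 1)) Q) :
    ∀ᵐ ω ∂μ,
      (pb ω : EReal) * g s (fun ω' => (((pb ω')⁻¹ : ℝ) : EReal) * Zb ω') ω +
        (q ω : EReal) * g s (fun ω' => (((q ω')⁻¹ : ℝ) : EReal) * Q ω') ω ≤
      ((pb ω + q ω : ℝ) : EReal) *
        g s (fun ω' => (((pb ω' + q ω')⁻¹ : ℝ) : EReal) * (Zb ω' + Q ω')) ω := by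
  have hyb : InLbar μ (F (s + 1)) fun ω' => (((pb ω')⁻¹ : ℝ) : EReal) * Zb ω' := by
    refine ⟨er_measurable_coe_mul (hpb.inv.mono (hFmono (Nat.le_succ s)) le_rfl) hZb.1, ?_⟩
    filter_upwards [hZb.2, hpbp] with ω h1 h2
    exact lt_top_iff_ne_top.2 (er_coe_mul_ne_top' (inv_nonneg.2 h2.le) h1.ne)
  have hyq : InLbar μ (F (s + 1)) fun ω' => (((q ω')⁻¹ : ℝ) : EReal) * Q ω' := by
    refine ⟨er_measurable_coe_mul (hq.inv.mono (hFmono (Nat.le_succ s)) le_rfl) hQ.1, ?_⟩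
    filter_upwards [hQ.2, hqp] with ω h1 h2
    exact lt_top_iff_ne_top.2 (er_coe_mul_ne_top' (inv_nonneg.2 h2.le) h1.ne)
  have hlam : Measurable[F s] fun ω => q ω / (pb ω + q ω) := hq.div (hpb.add hq)
  have hlam01 : ∀ᵐ ω ∂μ, 0 ≤ q ω / (pb ω + q ω) ∧ q ω / (pb ω + q ω) ≤ 1 := by
    filter_upwards [hpbp, hqp] with ω h1 h2
    constructor
    · exact div_nonneg h2.le (by positivity)
    · rw [div_le_one (by positivity)]
      exact le_add_of_nonneg_left h1.le
  have hconc := hgconc s hsT _ _ hyq hyb (fun ω => q ω / (pb ω + q ω)) hlam hlam01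
  -- the mixed argument equals the aggregated argument a.e.
  have hmix : (fun ω' => ((q ω' / (pb ω' + q ω') : ℝ) : EReal) *
        ((((q ω')⁻¹ : ℝ) : EReal) * Q ω') +
      ((1 - q ω' / (pb ω' + q ω') : ℝ) : EReal) * ((((pb ω')⁻¹ : ℝ) : EReal) * Zb ω'))
      =ᵐ[μ] fun ω' => (((pb ω' + q ω')⁻¹ : ℝ) : EReal) * (Zb ω' + Q ω') := by
    filter_upwards [hpbp, hqp] with ω h1 h2
    have hden : pb ω + q ω ≠ 0 := by positivity
    have e1 : 1 - q ω / (pb ω + q ω) = pb ω / (pb ω + q ω) := by field_simp; ring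
    have e2 : q ω / (pb ω + q ω) * (q ω)⁻¹ = (pb ω + q ω)⁻¹ := by
      rw [div_mul_eq_mul_div, mul_inv_cancel₀ h2.ne', one_div]
    have e3 : pb ω / (pb ω + q ω) * (pb ω)⁻¹ = (pb ω + q ω)⁻¹ := by
      rw [div_mul_eq_mul_div, mul_inv_cancel₀ h1.ne', one_div]
    rw [e1, ← mul_assoc, ← mul_assoc, ← EReal.coe_mul, ← EReal.coe_mul, e2, e3,
      er_coe_mul_add (inv_nonneg.2 (by positivity)) (Zb ω) (Q ω)]
    rw [add_comm]
  have hgeq := hgae s hsT _ _ hmix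
  filter_upwards [hconc, hgeq, hpbp, hqp] with ω hc hg h1 h2
  have hden : (0 : ℝ) < pb ω + q ω := by positivity
  rw [hg] at hc
  have hmul := mul_le_mul_of_nonneg_left hc
    (show (0 : EReal) ≤ ((pb ω + q ω : ℝ) : EReal) by exact_mod_cast hden.le)
  have e1 : 1 - q ω / (pb ω + q ω) = pb ω / (pb ω + q ω) := by field_simp; ring
  have e4 : (pb ω + q ω) * (1 - q ω / (pb ω + q ω)) = pb ω := by
    rw [e1, mul_comm, div_mul_cancel₀ _ hden.ne']
  have e5 : (pb ω + q ω) * (q ω / (pb ω + q ω)) = q ω := by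
    rw [mul_comm, div_mul_cancel₀ _ hden.ne']
  have heq : (pb ω : EReal) * g s (fun ω' => (((pb ω')⁻¹ : ℝ) : EReal) * Zb ω') ω +
      (q ω : EReal) * g s (fun ω' => (((q ω')⁻¹ : ℝ) : EReal) * Q ω') ω =
      ((pb ω + q ω : ℝ) : EReal) *
        (((q ω / (pb ω + q ω) : ℝ) : EReal) *
            g s (fun ω' => (((q ω')⁻¹ : ℝ) : EReal) * Q ω') ω +
          ((1 - q ω / (pb ω + q ω) : ℝ) : EReal) *
            g s (fun ω' => (((pb ω')⁻¹ : ℝ) : EReal) * Zb ω') ω) := by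
    rw [er_coe_mul_add hden.le, ← mul_assoc, ← mul_assoc, ← EReal.coe_mul, ← EReal.coe_mul,
      e4, e5, add_comm]
  exact le_trans (le_of_eq heq) hmul

end Aux3
section Aux4
variable {Ω : Type*} {m : MeasurableSpace Ω} {μ : MeasureTheory.Measure Ω}

lemma jensen_finset {ι : Type*} {F : ℕ → MeasurableSpace Ω} (hFmono : Monotone F)
    {T : ℕ} {g : ℕ → (Ω → EReal) → Ω → EReal}
    (hgae : ∀ t < T, ∀ y y' : Ω → EReal, y =ᵐ[μ] y' → g t y =ᵐ[μ] g t y')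
    (hgconc : ∀ t < T, ∀ y y' : Ω → EReal, InLbar μ (F (t + 1)) y →
      InLbar μ (F (t + 1)) y' →
      ∀ lam : Ω → ℝ, Measurable[F t] lam → (∀ᵐ ω ∂μ, 0 ≤ lam ω ∧ lam ω ≤ 1) →
      ∀ᵐ ω ∂μ, (lam ω : EReal) * g t y ω + ((1 - lam ω : ℝ) : EReal) * g t y' ω ≤
        g t (fun ω' => (lam ω' : EReal) * y ω' +
          ((1 - lam ω' : ℝ) : EReal) * y' ω') ω)
    {s : ℕ} (hsT : s < T) (p : ι → Ω → ℝ) (Z : ι → Ω → EReal) :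
    ∀ A : Finset ι, A.Nonempty →
      (∀ a ∈ A, Measurable[F s] (p a) ∧ ∀ᵐ ω ∂μ, 0 < p a ω) →
      (∀ a ∈ A, InLbar μ (F (s + 1)) (Z a)) →
      ∀ᵐ ω ∂μ, ∑ a ∈ A, (p a ω : EReal) *
          g s (fun ω' => (((p a ω')⁻¹ : ℝ) : EReal) * Z a ω') ω ≤
        ((∑ a ∈ A, p a ω : ℝ) : EReal) *
          g s (fun ω' => ((((∑ a ∈ A, p a ω')⁻¹ : ℝ)) : EReal) * ∑ a ∈ A, Z a ω') ω := by
  intro A hA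
  induction hA using Finset.Nonempty.cons_induction with
  | singleton b =>
    intro hp hZ
    filter_upwards [] with ω
    simp only [Finset.sum_singleton]
    exact le_rfl
  | cons b A hb hA ih =>
    intro hp hZ
    have hpb := hp b (Finset.mem_cons_self b A)
    have hpA := fun a ha => hp a (Finset.mem_cons_of_mem ha)
    have hZb := hZ b (Finset.mem_cons_self b A)
    have hZA := fun a ha => hZ a (Finset.mem_cons_of_mem ha)
    have IH := ih hpA hZA
    -- aggregate over A
    have hqmeas : Measurable[F s] fun ω => ∑ a ∈ A, p a ω :=
      Finset.measurable_sum A fun a ha => (hpA a ha).1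
    have hqpos : ∀ᵐ ω ∂μ, 0 < ∑ a ∈ A, p a ω := by
      filter_upwards [ae_finset (μ := μ) A (fun a ω => 0 < p a ω)
        fun a ha => (hpA a ha).2] with ω h
      exact Finset.sum_pos h hA
    have hQ : InLbar μ (F (s + 1)) fun ω => ∑ a ∈ A, Z a ω := by
      refine ⟨er_measurable_sum A fun a ha => (hZA a ha).1, ?_⟩
      filter_upwards [ae_finset (μ := μ) A (fun a ω => Z a ω < ⊤)
        fun a ha => (hZA a ha).2] with ω h
      exact er_finset_sum_lt_top A _ h
    have hpair := jensen_pair hFmono hgae hgconc hsT (p b) (fun ω => ∑ a ∈ A, p a ω)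
      (Z b) (fun ω => ∑ a ∈ A, Z a ω) hpb.1 hpb.2 hqmeas hqpos hZb hQ
    simp only [Finset.sum_cons]
    filter_upwards [IH, hpair] with ω h1 h2
    refine le_trans (add_le_add le_rfl h1) (le_trans (le_of_eq rfl) h2)

end Aux4
section Aux5
variable {Ω : Type*} {m : MeasurableSpace Ω} {μ : MeasureTheory.Measure Ω}

lemma sum_shareVal_le {ι : Type*} [Fintype ι] [Nonempty ι]
    {F : ℕ → MeasurableSpace Ω} (hFmono : Monotone F)
    {T : ℕ} {g : ℕ → (Ω → EReal) → Ω → EReal}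
    (hgL : ∀ t < T, ∀ y : Ω → EReal, InLbar μ (F (t + 1)) y →
      Measurable[F t] (g t y) ∧ ∀ᵐ ω ∂μ, g t y ω < ⊤)
    (hgae : ∀ t < T, ∀ y y' : Ω → EReal, y =ᵐ[μ] y' → g t y =ᵐ[μ] g t y')
    (hgmono : ∀ t < T, ∀ y y' : Ω → EReal, InLbar μ (F (t + 1)) y →
      InLbar μ (F (t + 1)) y' → y ≤ᵐ[μ] y' → g t y ≤ᵐ[μ] g t y')
    (hgconc : ∀ t < T, ∀ y y' : Ω → EReal, InLbar μ (F (t + 1)) y →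
      InLbar μ (F (t + 1)) y' →
      ∀ lam : Ω → ℝ, Measurable[F t] lam → (∀ᵐ ω ∂μ, 0 ≤ lam ω ∧ lam ω ≤ 1) →
      ∀ᵐ ω ∂μ, (lam ω : EReal) * g t y ω + ((1 - lam ω : ℝ) : EReal) * g t y' ω ≤
        g t (fun ω' => (lam ω' : EReal) * y ω' +
          ((1 - lam ω' : ℝ) : EReal) * y' ω') ω)
    (Hs : ℕ → Ω → ℝ) (hHs : ∀ s ≤ T, Measurable[F s] (Hs s) ∧ ∀ᵐ ω ∂μ, 0 < Hs s ω)
    (w : ℕ → ι → Ω → ℝ) (a₀ : ι) :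
    ∀ k, k ≤ T →
      (∀ s, T - k ≤ s → s ≤ T →
        (∀ a, Measurable[F s] (w s a) ∧ ∀ᵐ ω ∂μ, 0 < w s a ω) ∧
        ((fun ω => ∑ a, w s a ω) =ᵐ[μ] Hs s)) →
      ∀ᵐ ω ∂μ, ∑ a, shareVal g T w k a ω ≤ shareVal g T (fun s _ => Hs s) k a₀ ω := by
  intro k
  induction k with
  | zero =>
    intro _ hw
    filter_upwards [(hw T (by omega) le_rfl).2] with ω h
    show ∑ a, ((w T a ω : ℝ) : EReal) ≤ ((Hs T ω : ℝ) : EReal)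
    rw [← er_coe_finset_sum]
    exact_mod_cast le_of_eq h
  | succ k ih =>
    intro hk hw
    have hsT : T - (k + 1) < T := by omega
    have hTk : T - k = T - (k + 1) + 1 := by omega
    have ihh := ih (by omega) fun s' h1 h2 => hw s' (by omega) h2
    have hws := hw (T - (k + 1)) (by omega) (by omega)
    have hHss := hHs (T - (k + 1)) (by omega)
    have hInZ : ∀ a, InLbar μ (F (T - (k + 1) + 1)) (shareVal g T w k a) := by
      intro a
      have := shareVal_inLbar hFmono hgL w a k (by omega)
        fun s' h1 h2 => (hw s' (by omega) h2).1 a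
      rwa [hTk] at this
    have hV : InLbar μ (F (T - (k + 1) + 1)) (shareVal g T (fun s _ => Hs s) k a₀) := by
      have := shareVal_inLbar hFmono hgL (fun s _ => Hs s) a₀ k (by omega)
        fun s' h1 h2 => hHs s' h2
      rwa [hTk] at this
    have hjen := jensen_finset hFmono hgae hgconc hsT (fun a => w (T - (k + 1)) a)
      (fun a => shareVal g T w k a) Finset.univ Finset.univ_nonempty
      (fun a _ => hws.1 a) fun a _ => hInZ a
    have hargeq : (fun ω' => (((∑ a, w (T - (k + 1)) a ω')⁻¹ : ℝ) : EReal) *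
          ∑ a, shareVal g T w k a ω')
        =ᵐ[μ] fun ω' => (((Hs (T - (k + 1)) ω')⁻¹ : ℝ) : EReal) *
          ∑ a, shareVal g T w k a ω' := by
      filter_upwards [hws.2] with ω h
      rw [h]
    have hg1 := hgae _ hsT _ _ hargeq
    have hy1 : InLbar μ (F (T - (k + 1) + 1))
        fun ω' => (((Hs (T - (k + 1)) ω')⁻¹ : ℝ) : EReal) * ∑ a, shareVal g T w k a ω' := by
      refine ⟨er_measurable_coe_mul ((hHss.1.inv).mono (hFmono (Nat.le_succ _)) le_rfl)
        (er_measurable_sum Finset.univ fun a _ => (hInZ a).1), ?_⟩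
      have hlt : ∀ᵐ ω ∂μ, ∀ a ∈ Finset.univ, shareVal g T w k a ω < ⊤ :=
        ae_finset (μ := μ) Finset.univ _ fun a _ => (hInZ a).2
      filter_upwards [hlt, hHss.2] with ω h1 h2
      exact lt_top_iff_ne_top.2 (er_coe_mul_ne_top' (inv_nonneg.2 h2.le)
        (er_finset_sum_lt_top Finset.univ _ h1).ne)
    have hy2 : InLbar μ (F (T - (k + 1) + 1))
        fun ω' => (((Hs (T - (k + 1)) ω')⁻¹ : ℝ) : EReal) *
          shareVal g T (fun s _ => Hs s) k a₀ ω' := by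
      refine ⟨er_measurable_coe_mul ((hHss.1.inv).mono (hFmono (Nat.le_succ _)) le_rfl)
        hV.1, ?_⟩
      filter_upwards [hV.2, hHss.2] with ω h1 h2
      exact lt_top_iff_ne_top.2 (er_coe_mul_ne_top' (inv_nonneg.2 h2.le) h1.ne)
    have hle : (fun ω' => (((Hs (T - (k + 1)) ω')⁻¹ : ℝ) : EReal) *
          ∑ a, shareVal g T w k a ω')
        ≤ᵐ[μ] fun ω' => (((Hs (T - (k + 1)) ω')⁻¹ : ℝ) : EReal) *
          shareVal g T (fun s _ => Hs s) k a₀ ω' := by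
      filter_upwards [ihh, hHss.2] with ω h1 h2
      exact mul_le_mul_of_nonneg_left h1 (by exact_mod_cast inv_nonneg.2 h2.le)
    have hg2 := hgmono _ hsT _ _ hy1 hy2 hle
    filter_upwards [hjen, hg1, hg2, hws.2, hHss.2] with ω h1 h2 h3 h4 h5
    have step1 : ∑ a, shareVal g T w (k + 1) a ω ≤
        ((∑ a, w (T - (k + 1)) a ω : ℝ) : EReal) *
          g (T - (k + 1)) (fun ω' => (((∑ a, w (T - (k + 1)) a ω')⁻¹ : ℝ) : EReal) *
            ∑ a, shareVal g T w k a ω') ω := h1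
    rw [h4, h2] at step1
    refine le_trans step1 ?_
    show (Hs (T - (k + 1)) ω : EReal) * _ ≤ (Hs (T - (k + 1)) ω : EReal) * _
    exact mul_le_mul_of_nonneg_left h3 (by exact_mod_cast h5.le)

end Aux5
section Aux6
variable {Ω : Type*} {m : MeasurableSpace Ω} {μ : MeasureTheory.Measure Ω}
  {F : ℕ → MeasurableSpace Ω} {T : ℕ} {g : ℕ → (Ω → EReal) → Ω → EReal}

lemma g_local
    (hgae : ∀ t < T, ∀ y y' : Ω → EReal, y =ᵐ[μ] y' → g t y =ᵐ[μ] g t y')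
    (hgconc : ∀ t < T, ∀ y y' : Ω → EReal, InLbar μ (F (t + 1)) y →
      InLbar μ (F (t + 1)) y' →
      ∀ lam : Ω → ℝ, Measurable[F t] lam → (∀ᵐ ω ∂μ, 0 ≤ lam ω ∧ lam ω ≤ 1) →
      ∀ᵐ ω ∂μ, (lam ω : EReal) * g t y ω + ((1 - lam ω : ℝ) : EReal) * g t y' ω ≤
        g t (fun ω' => (lam ω' : EReal) * y ω' +
          ((1 - lam ω' : ℝ) : EReal) * y' ω') ω)
    {t : ℕ} (htT : t < T) {B : Set Ω} (hB : MeasurableSet[F t] B) {y y' : Ω → EReal}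
    (hy : InLbar μ (F (t + 1)) y) (hy' : InLbar μ (F (t + 1)) y')
    (heq : ∀ᵐ ω ∂μ, ω ∈ B → y ω = y' ω) :
    ∀ᵐ ω ∂μ, ω ∈ B → g t y ω ≤ g t y' ω := by
  classical
  have hlam : Measurable[F t] fun ω => if ω ∈ B then (1 : ℝ) else 0 :=
    Measurable.ite hB measurable_const measurable_const
  have h01 : ∀ᵐ ω ∂μ, 0 ≤ (if ω ∈ B then (1 : ℝ) else 0) ∧
      (if ω ∈ B then (1 : ℝ) else 0) ≤ 1 := by
    filter_upwards [] with ω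
    split <;> norm_num
  have hconc := hgconc t htT y y' hy hy' _ hlam h01
  have hmixeq : (fun ω' => (((if ω' ∈ B then (1 : ℝ) else 0) : ℝ) : EReal) * y ω' +
      ((1 - (if ω' ∈ B then (1 : ℝ) else 0) : ℝ) : EReal) * y' ω') =
      fun ω' => if ω' ∈ B then y ω' else y' ω' := by
    funext ω'
    by_cases hω : ω' ∈ B
    · simp [hω]
    · simp [hω]
  have hzeq : (fun ω' => if ω' ∈ B then y ω' else y' ω') =ᵐ[μ] y' := by
    filter_upwards [heq] with ω h
    by_cases hω : ω ∈ B
    · rw [if_pos hω, h hω]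
    · rw [if_neg hω]
  have hgz := hgae t htT _ _ hzeq
  rw [hmixeq] at hconc
  filter_upwards [hconc, hgz] with ω h1 h2 hmem
  rw [if_pos hmem] at h1
  simp only [EReal.coe_one, one_mul, sub_self, EReal.coe_zero, zero_mul, add_zero] at h1
  rw [h2] at h1
  exact h1

lemma perspective_mono
    (hgae : ∀ t < T, ∀ y y' : Ω → EReal, y =ᵐ[μ] y' → g t y =ᵐ[μ] g t y')
    (hgconc : ∀ t < T, ∀ y y' : Ω → EReal, InLbar μ (F (t + 1)) y →
      InLbar μ (F (t + 1)) y' →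
      ∀ lam : Ω → ℝ, Measurable[F t] lam → (∀ᵐ ω ∂μ, 0 ≤ lam ω ∧ lam ω ≤ 1) →
      ∀ᵐ ω ∂μ, (lam ω : EReal) * g t y ω + ((1 - lam ω : ℝ) : EReal) * g t y' ω ≤
        g t (fun ω' => (lam ω' : EReal) * y ω' +
          ((1 - lam ω' : ℝ) : EReal) * y' ω') ω)
    (hg0 : ∀ t < T, g t (fun _ => (0 : EReal)) =ᵐ[μ] fun _ => (0 : EReal))
    (hFmono : Monotone F)
    {t : ℕ} (htT : t < T) {q q' : Ω → ℝ}
    (hq : Measurable[F t] q) (hq' : Measurable[F t] q')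
    (hqp : ∀ᵐ ω ∂μ, 0 < q ω) (hq'p : ∀ᵐ ω ∂μ, 0 < q' ω)
    (hle : ∀ᵐ ω ∂μ, q ω ≤ q' ω) {V : Ω → EReal} (hV : InLbar μ (F (t + 1)) V) :
    ∀ᵐ ω ∂μ, (q ω : EReal) * g t (fun ω' => (((q ω')⁻¹ : ℝ) : EReal) * V ω') ω ≤
      (q' ω : EReal) * g t (fun ω' => (((q' ω')⁻¹ : ℝ) : EReal) * V ω') ω := by
  have hy : InLbar μ (F (t + 1)) fun ω' => (((q ω')⁻¹ : ℝ) : EReal) * V ω' := by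
    refine ⟨er_measurable_coe_mul ((hq.inv).mono (hFmono (Nat.le_succ t)) le_rfl) hV.1, ?_⟩
    filter_upwards [hV.2, hqp] with ω h1 h2
    exact lt_top_iff_ne_top.2 (er_coe_mul_ne_top' (inv_nonneg.2 h2.le) h1.ne)
  have h0 : InLbar μ (F (t + 1)) fun _ => (0 : EReal) := by
    refine ⟨measurable_const, ?_⟩
    filter_upwards [] with ω
    simp
  have hlam : Measurable[F t] fun ω => q ω / q' ω := hq.div hq'
  have h01 : ∀ᵐ ω ∂μ, 0 ≤ q ω / q' ω ∧ q ω / q' ω ≤ 1 := by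
    filter_upwards [hqp, hq'p, hle] with ω h1 h2 h3
    exact ⟨div_nonneg h1.le h2.le, (div_le_one h2).2 h3⟩
  have hconc := hgconc t htT _ _ hy h0 _ hlam h01
  have hmix : (fun ω' => ((q ω' / q' ω' : ℝ) : EReal) * ((((q ω')⁻¹ : ℝ) : EReal) * V ω') +
      ((1 - q ω' / q' ω' : ℝ) : EReal) * (0 : EReal))
      =ᵐ[μ] fun ω' => (((q' ω')⁻¹ : ℝ) : EReal) * V ω' := by
    filter_upwards [hqp, hq'p] with ω h1 h2
    rw [mul_zero, add_zero, ← mul_assoc, ← EReal.coe_mul, div_mul_eq_mul_div,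
      mul_inv_cancel₀ h1.ne', one_div]
  have hgm := hgae t htT _ _ hmix
  have hg0' := hg0 t htT
  filter_upwards [hconc, hgm, hg0', hqp, hq'p] with ω h1 h2 h3 h4 h5
  rw [h3, mul_zero, add_zero, h2] at h1
  have hmul := mul_le_mul_of_nonneg_left h1
    (show (0 : EReal) ≤ ((q' ω : ℝ) : EReal) by exact_mod_cast h5.le)
  refine le_trans (le_of_eq ?_) hmul
  rw [← mul_assoc, ← EReal.coe_mul, mul_comm (q' ω), div_mul_cancel₀ _ h5.ne']

end Aux6
/-- **Proposition 4.3 (wealth-dependent dynamic risk sharing).** The optimal risk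
sharing problem admits the proportional optimal solution
`x^{a,*}_s = (H^a_t / H_t) · H_s`, and the value function
`y_t : L⁰ₜ((0,∞)^{|𝔸|}) → L̲⁰ₜ` is `𝓕ₜ`-stable, increasing and sequentially upper
semi-continuous for `t = 0, …, T`. -/
theorem risk_sharing [Fintype ι] [Nonempty ι] {m : MeasurableSpace Ω}
    {μ : Measure Ω} [IsProbabilityMeasure μ]
    (T : ℕ) (F : ℕ → MeasurableSpace Ω)
    (hFmono : Monotone F) (hFm : ∀ t, F t ≤ m) (hFT : F T = m)
    (g : ℕ → (Ω → EReal) → Ω → EReal)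
    -- g_t maps L̲⁰_{t+1} into L̲⁰_t and respects a.e. equality
    (hgL : ∀ t < T, ∀ y : Ω → EReal, InLbar μ (F (t + 1)) y →
      Measurable[F t] (g t y) ∧ ∀ᵐ ω ∂μ, g t y ω < ⊤)
    (hgae : ∀ t < T, ∀ y y' : Ω → EReal, y =ᵐ[μ] y' → g t y =ᵐ[μ] g t y')
    -- g_t is increasing
    (hgmono : ∀ t < T, ∀ y y' : Ω → EReal, InLbar μ (F (t + 1)) y →
      InLbar μ (F (t + 1)) y' → y ≤ᵐ[μ] y' → g t y ≤ᵐ[μ] g t y')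
    -- g_t is 𝓕ₜ-concave
    (hgconc : ∀ t < T, ∀ y y' : Ω → EReal, InLbar μ (F (t + 1)) y →
      InLbar μ (F (t + 1)) y' →
      ∀ lam : Ω → ℝ, Measurable[F t] lam → (∀ᵐ ω ∂μ, 0 ≤ lam ω ∧ lam ω ≤ 1) →
      ∀ᵐ ω ∂μ, (lam ω : EReal) * g t y ω + ((1 - lam ω : ℝ) : EReal) * g t y' ω ≤
        g t (fun ω' => (lam ω' : EReal) * y ω' +
          ((1 - lam ω' : ℝ) : EReal) * y' ω') ω)
    -- g_t is sequentially upper semi-continuous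
    (hgusc : ∀ t < T, ∀ (yk : ℕ → Ω → EReal) (y₀ : Ω → EReal),
      (∀ k, InLbar μ (F (t + 1)) (yk k)) → InLbar μ (F (t + 1)) y₀ →
      (∀ᵐ ω ∂μ, Filter.Tendsto (fun k => yk k ω) Filter.atTop (nhds (y₀ ω))) →
      ∀ᵐ ω ∂μ, Filter.limsup (fun k => g t (yk k) ω) Filter.atTop ≤ g t y₀ ω)
    -- g_t(0) = 0
    (hg0 : ∀ t < T, g t (fun _ => (0 : EReal)) =ᵐ[μ] fun _ => (0 : EReal))
    -- the endowment processes H^a ∈ L⁰_{s,++}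
    (Ha : ℕ → ι → Ω → ℝ)
    (hHa : ∀ s ≤ T, ∀ a, Measurable[F s] (Ha s a) ∧ ∀ᵐ ω ∂μ, 0 < Ha s a ω)
    -- the value functions y_t, given by an essential supremum over allocations
    (Y : ℕ → (ι → Ω → ℝ) → Ω → EReal)
    (hY : ∀ t ≤ T, ∀ h : ι → Ω → ℝ,
      (∀ a, Measurable[F t] (h a) ∧ ∀ᵐ ω ∂μ, 0 < h a ω) →
      Measurable[F t] (Y t h) ∧
      (∀ x : ℕ → ι → Ω → ℝ,
        IsAlloc μ F T t (fun s ω => ∑ a, Ha s a ω) x →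
        ∀ᵐ ω ∂μ, (∑ a, shareVal g T (fun s a => if s = t then h a else x s a)
          (T - t) a ω) ≤ Y t h ω) ∧
      (∀ b : Ω → EReal, Measurable[F t] b →
        (∀ x : ℕ → ι → Ω → ℝ,
          IsAlloc μ F T t (fun s ω => ∑ a, Ha s a ω) x →
          ∀ᵐ ω ∂μ, (∑ a, shareVal g T (fun s a => if s = t then h a else x s a)
            (T - t) a ω) ≤ b ω) →
        ∀ᵐ ω ∂μ, Y t h ω ≤ b ω)) :
    -- (1) the proportional allocation x^{a,*}_s = (H^a_t / H_t) H_s is feasible and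
    -- optimal for the problem started at t with initial endowments (H^a_t)
    (∀ t ≤ T,
      IsAlloc μ F T t (fun s ω => ∑ a, Ha s a ω)
        (fun s a ω => Ha t a ω / (∑ b, Ha t b ω) * ∑ b, Ha s b ω) ∧
      Y t (Ha t) =ᵐ[μ] fun ω =>
        ∑ a, shareVal g T
          (fun s a ω' => if s = t then Ha t a ω' else
            Ha t a ω' / (∑ b, Ha t b ω') * ∑ b, Ha s b ω') (T - t) a ω) ∧
    -- (2) y_t is 𝓕ₜ-stable
    (∀ t ≤ T, ∀ (A : ℕ → Set Ω), IsCondPartition μ (F t) A →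
      ∀ (hk : ℕ → ι → Ω → ℝ) (h₀ : ι → Ω → ℝ),
      (∀ k a, Measurable[F t] (hk k a) ∧ ∀ᵐ ω ∂μ, 0 < hk k a ω) →
      (∀ a, Measurable[F t] (h₀ a) ∧ ∀ᵐ ω ∂μ, 0 < h₀ a ω) →
      (∀ k, ∀ᵐ ω ∂μ, ω ∈ A k → ∀ a, h₀ a ω = hk k a ω) →
      ∀ k, ∀ᵐ ω ∂μ, ω ∈ A k → Y t h₀ ω = Y t (hk k) ω) ∧
    -- y_t is increasing
    (∀ t ≤ T, ∀ h h' : ι → Ω → ℝ,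
      (∀ a, Measurable[F t] (h a) ∧ ∀ᵐ ω ∂μ, 0 < h a ω) →
      (∀ a, Measurable[F t] (h' a) ∧ ∀ᵐ ω ∂μ, 0 < h' a ω) →
      (∀ a, h a ≤ᵐ[μ] h' a) → Y t h ≤ᵐ[μ] Y t h') ∧
    -- y_t is sequentially upper semi-continuous
    (∀ t ≤ T, ∀ (hk : ℕ → ι → Ω → ℝ) (h₀ : ι → Ω → ℝ),
      (∀ k a, Measurable[F t] (hk k a) ∧ ∀ᵐ ω ∂μ, 0 < hk k a ω) →
      (∀ a, Measurable[F t] (h₀ a) ∧ ∀ᵐ ω ∂μ, 0 < h₀ a ω) →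
      (∀ a, ∀ᵐ ω ∂μ, Filter.Tendsto (fun k => hk k a ω) Filter.atTop
        (nhds (h₀ a ω))) →
      ∀ᵐ ω ∂μ, Filter.limsup (fun k => Y t (hk k) ω) Filter.atTop ≤ Y t h₀ ω) := by
  classical
  have a₀ : ι := Classical.arbitrary ι
  -- aggregate endowment facts
  have hT0 : ∀ s ≤ T, Measurable[F s] (fun ω => ∑ b, Ha s b ω) ∧
      ∀ᵐ ω ∂μ, 0 < ∑ b, Ha s b ω := by
    intro s hs
    refine ⟨Finset.measurable_sum _ fun b _ => (hHa s hs b).1, ?_⟩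
    filter_upwards [ae_finset (μ := μ) Finset.univ (fun b ω => 0 < Ha s b ω)
      fun b _ => (hHa s hs b).2] with ω h
    exact Finset.sum_pos (fun b hb => h b hb) Finset.univ_nonempty
  have hsumpos : ∀ h : ι → Ω → ℝ, (∀ a, ∀ᵐ ω ∂μ, 0 < h a ω) →
      ∀ᵐ ω ∂μ, 0 < ∑ b, h b ω := by
    intro h hp
    filter_upwards [ae_finset (μ := μ) Finset.univ (fun b ω => 0 < h b ω)
      fun b _ => hp b] with ω hh
    exact Finset.sum_pos (fun b hb => hh b hb) Finset.univ_nonempty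
  -- the aggregate value process V k = shareVal of the aggregate endowment
  have hVIn : ∀ t < T, InLbar μ (F (t + 1))
      (shareVal g T (fun s (_ : ι) ω => ∑ b, Ha s b ω) (T - t - 1) a₀) := by
    intro t ht
    have := shareVal_inLbar hFmono hgL (fun s (_ : ι) ω => ∑ b, Ha s b ω) a₀ (T - t - 1)
      (by omega) fun s' _ h2 => hT0 s' h2
    rwa [show T - (T - t - 1) = t + 1 by omega] at this
  -- closed form at time T
  have hclosedT : ∀ h : ι → Ω → ℝ, (∀ a, Measurable[F T] (h a) ∧ ∀ᵐ ω ∂μ, 0 < h a ω) →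
      Y T h =ᵐ[μ] fun ω => ((∑ b, h b ω : ℝ) : EReal) := by
    intro h hp
    obtain ⟨hm, hge, hlub⟩ := hY T le_rfl h hp
    have halloc : IsAlloc μ F T T (fun s ω => ∑ b, Ha s b ω) fun s (a : ι) ω => (1:ℝ) := by
      intro s h1 h2; omega
    have hval : ∀ x : ℕ → ι → Ω → ℝ,
        (fun ω => ∑ a, shareVal g T (fun s a => if s = T then h a else x s a) (T - T) a ω) =
          fun ω => ((∑ b, h b ω : ℝ) : EReal) := by
      intro x
      funext ω
      rw [Nat.sub_self]
      show ∑ a, (((if T = T then h a else x T a) ω : ℝ) : EReal) = _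
      simp only [eq_self_iff_true, if_true]
      exact (er_coe_finset_sum _ _).symm
    have h1 : ∀ᵐ ω ∂μ, Y T h ω ≤ ((∑ b, h b ω : ℝ) : EReal) := by
      refine hlub _ (measurable_coe_real_ereal.comp
        (Finset.measurable_sum _ fun b _ => (hp b).1)) ?_
      intro x hx
      filter_upwards [] with ω
      exact le_of_eq (congrFun (hval x) ω)
    have h2 := hge _ halloc
    filter_upwards [h1, h2] with ω e1 e2
    refine le_antisymm e1 ?_
    rw [← congrFun (hval fun s (a : ι) ω => (1:ℝ)) ω]
    exact e2
  -- value of the proportional allocation, agent by agent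
  have hpropval : ∀ t, t < T → ∀ h : ι → Ω → ℝ,
      (∀ a, Measurable[F t] (h a) ∧ ∀ᵐ ω ∂μ, 0 < h a ω) → ∀ a : ι,
      shareVal g T (fun s b => if s = t then h b else
          fun ω => h b ω / (∑ c, h c ω) * ∑ c, Ha s c ω) (T - t) a =ᵐ[μ]
        fun ω => ((h a ω : ℝ) : EReal) *
          g t (fun ω' => (((∑ c, h c ω')⁻¹ : ℝ) : EReal) *
            shareVal g T (fun s (_ : ι) ω => ∑ b, Ha s b ω) (T - t - 1) a₀ ω') ω := by
    intro t ht h hp a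
    set w : ℕ → ι → Ω → ℝ := fun s b => if s = t then h b else
      fun ω => h b ω / (∑ c, h c ω) * ∑ c, Ha s c ω with hw
    have hk : T - t = T - t - 1 + 1 := by omega
    have hidx : T - (T - t - 1 + 1) = t := by omega
    have hcpos : ∀ᵐ ω ∂μ, 0 < h a ω / ∑ c, h c ω := by
      filter_upwards [(hp a).2, hsumpos h fun b => (hp b).2] with ω e1 e2
      exact div_pos e1 e2
    have hinner := shareVal_prop_eq (μ := μ) hgae w (fun s (_ : ι) ω => ∑ b, Ha s b ω)
      (fun ω => h a ω / ∑ c, h c ω) hcpos a a₀ (T - t - 1) (by omega) ?_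
    swap
    · intro s h1 h2
      have hst : ¬ s = t := by omega
      refine ⟨(hT0 s h2).2, ?_⟩
      filter_upwards [] with ω
      show (if s = t then h a else fun ω => h a ω / (∑ c, h c ω) * ∑ c, Ha s c ω) ω = _
      simp only [if_neg hst]
    have harg : (fun ω' => (((h a ω')⁻¹ : ℝ) : EReal) * shareVal g T w (T - t - 1) a ω')
        =ᵐ[μ] fun ω' => (((∑ c, h c ω')⁻¹ : ℝ) : EReal) *
          shareVal g T (fun s (_ : ι) ω => ∑ b, Ha s b ω) (T - t - 1) a₀ ω' := by
      filter_upwards [hinner, (hp a).2, hsumpos h fun b => (hp b).2] with ω e1 e2 e3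
      rw [e1, ← mul_assoc, ← EReal.coe_mul, div_eq_mul_inv, ← mul_assoc,
        inv_mul_cancel₀ e2.ne', one_mul]
    have hgarg := hgae t ht _ _ harg
    have hunfold : shareVal g T w (T - t - 1 + 1) a = fun ω =>
        ((w (T - (T - t - 1 + 1)) a ω : ℝ) : EReal) * g (T - (T - t - 1 + 1))
          (fun ω' => (((w (T - (T - t - 1 + 1)) a ω')⁻¹ : ℝ) : EReal) *
            shareVal g T w (T - t - 1) a ω') ω := rfl
    rw [hidx] at hunfold
    conv_lhs => rw [hk]
    rw [hunfold]
    have hwt : ∀ ω : Ω, w t a ω = h a ω := by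
      intro ω
      show (if t = t then h a else fun ω => h a ω / (∑ c, h c ω) * ∑ c, Ha t c ω) ω = _
      simp only [eq_self_iff_true, if_true]
    have hfun : (fun ω' => (((w t a ω')⁻¹ : ℝ) : EReal) * shareVal g T w (T - t - 1) a ω')
        = fun ω' => (((h a ω')⁻¹ : ℝ) : EReal) * shareVal g T w (T - t - 1) a ω' := by
      funext ω'
      rw [hwt ω']
    rw [hfun]
    filter_upwards [hgarg] with ω e1
    rw [e1, hwt ω]
  -- the proportional allocation is feasible
  have hallocP : ∀ t ≤ T, ∀ h : ι → Ω → ℝ,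
      (∀ a, Measurable[F t] (h a) ∧ ∀ᵐ ω ∂μ, 0 < h a ω) →
      IsAlloc μ F T t (fun s ω => ∑ b, Ha s b ω)
        fun s b ω => h b ω / (∑ c, h c ω) * ∑ c, Ha s c ω := by
    intro t htT h hp s h1 h2
    constructor
    · intro b
      constructor
      · exact (((hp b).1.div (Finset.measurable_sum _ fun c _ => (hp c).1)).mono
          (hFmono h1.le) le_rfl).mul (hT0 s h2).1
      · filter_upwards [(hp b).2, hsumpos h fun c => (hp c).2, (hT0 s h2).2] with ω e1 e2 e3
        exact mul_pos (div_pos e1 e2) e3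
    · filter_upwards [hsumpos h fun c => (hp c).2] with ω e1
      rw [← Finset.sum_mul, ← Finset.sum_div, div_self e1.ne', one_mul]
  -- the sum of the proportional values equals the closed form
  have hPhiSum : ∀ t, t < T → ∀ h : ι → Ω → ℝ,
      (∀ a, Measurable[F t] (h a) ∧ ∀ᵐ ω ∂μ, 0 < h a ω) →
      (fun ω => ∑ a, shareVal g T (fun s b => if s = t then h b else
          fun ω => h b ω / (∑ c, h c ω) * ∑ c, Ha s c ω) (T - t) a ω)
        =ᵐ[μ] fun ω => ((∑ b, h b ω : ℝ) : EReal) *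
          g t (fun ω' => (((∑ c, h c ω')⁻¹ : ℝ) : EReal) *
            shareVal g T (fun s (_ : ι) ω => ∑ b, Ha s b ω) (T - t - 1) a₀ ω') ω := by
    intro t ht h hp
    have hall := ae_finset (μ := μ) Finset.univ _ fun a (_ : a ∈ Finset.univ) =>
      hpropval t ht h hp a
    filter_upwards [hall, ae_finset (μ := μ) Finset.univ (fun a ω => 0 < h a ω)
      fun a _ => (hp a).2] with ω e1 e2
    rw [Finset.sum_congr rfl fun a ha => e1 a ha]
    exact (er_coe_sum_mul Finset.univ (fun a => h a ω) (fun a ha => (e2 a ha).le) _).symm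
  -- upper bound for the value of an arbitrary allocation
  have hub : ∀ t, t < T → ∀ h : ι → Ω → ℝ,
      (∀ a, Measurable[F t] (h a) ∧ ∀ᵐ ω ∂μ, 0 < h a ω) →
      ∀ x : ℕ → ι → Ω → ℝ, IsAlloc μ F T t (fun s ω => ∑ b, Ha s b ω) x →
      ∀ᵐ ω ∂μ, (∑ a, shareVal g T (fun s b => if s = t then h b else x s b) (T - t) a ω) ≤
        ((∑ b, h b ω : ℝ) : EReal) *
          g t (fun ω' => (((∑ c, h c ω')⁻¹ : ℝ) : EReal) *
            shareVal g T (fun s (_ : ι) ω => ∑ b, Ha s b ω) (T - t - 1) a₀ ω') ω := by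
    intro t ht h hp x hx
    set w : ℕ → ι → Ω → ℝ := fun s b => if s = t then h b else x s b with hw
    have hk : T - t = T - t - 1 + 1 := by omega
    have hidx : T - (T - t - 1 + 1) = t := by omega
    have hwprop : ∀ s', T - (T - t - 1) ≤ s' → s' ≤ T →
        (∀ b, Measurable[F s'] (w s' b) ∧ ∀ᵐ ω ∂μ, 0 < w s' b ω) ∧
        ((fun ω => ∑ b, w s' b ω) =ᵐ[μ] fun ω => ∑ b, Ha s' b ω) := by
      intro s' e1 e2
      have hst : ¬ s' = t := by omega
      have hxx := hx s' (by omega) e2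
      constructor
      · intro b
        simp only [hw, if_neg hst]
        exact hxx.1 b
      · simp only [hw, if_neg hst]
        exact hxx.2
    have hZIn : ∀ b, InLbar μ (F (t + 1)) (shareVal g T w (T - t - 1) b) := by
      intro b
      have := shareVal_inLbar hFmono hgL w b (T - t - 1) (by omega)
        fun s' e1 e2 => (hwprop s' e1 e2).1 b
      rwa [show T - (T - t - 1) = t + 1 by omega] at this
    have hagg := sum_shareVal_le hFmono hgL hgae hgmono hgconc
      (fun s ω => ∑ b, Ha s b ω) hT0 w a₀ (T - t - 1) (by omega) hwprop
    have hjen := jensen_finset hFmono hgae hgconc (s := t) ht h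
      (fun b => shareVal g T w (T - t - 1) b) Finset.univ Finset.univ_nonempty
      (fun b _ => hp b) fun b _ => hZIn b
    have hsmeas : Measurable[F t] fun ω => ∑ c, h c ω :=
      Finset.measurable_sum _ fun c _ => (hp c).1
    have hy1 : InLbar μ (F (t + 1)) fun ω' => (((∑ c, h c ω')⁻¹ : ℝ) : EReal) *
        ∑ b, shareVal g T w (T - t - 1) b ω' := by
      refine ⟨er_measurable_coe_mul (hsmeas.inv.mono (hFmono (Nat.le_succ t)) le_rfl)
        (er_measurable_sum Finset.univ fun b _ => (hZIn b).1), ?_⟩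
      filter_upwards [ae_finset (μ := μ) Finset.univ
        (fun b ω => shareVal g T w (T - t - 1) b ω < ⊤) fun b _ => (hZIn b).2,
        hsumpos h fun c => (hp c).2] with ω e1 e2
      exact lt_top_iff_ne_top.2 (er_coe_mul_ne_top' (inv_nonneg.2 e2.le)
        (er_finset_sum_lt_top Finset.univ _ e1).ne)
    have hy2 : InLbar μ (F (t + 1)) fun ω' => (((∑ c, h c ω')⁻¹ : ℝ) : EReal) *
        shareVal g T (fun s (_ : ι) ω => ∑ b, Ha s b ω) (T - t - 1) a₀ ω' := by
      refine ⟨er_measurable_coe_mul (hsmeas.inv.mono (hFmono (Nat.le_succ t)) le_rfl)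
        (hVIn t ht).1, ?_⟩
      filter_upwards [(hVIn t ht).2, hsumpos h fun c => (hp c).2] with ω e1 e2
      exact lt_top_iff_ne_top.2 (er_coe_mul_ne_top' (inv_nonneg.2 e2.le) e1.ne)
    have hle2 : (fun ω' => (((∑ c, h c ω')⁻¹ : ℝ) : EReal) *
          ∑ b, shareVal g T w (T - t - 1) b ω')
        ≤ᵐ[μ] fun ω' => (((∑ c, h c ω')⁻¹ : ℝ) : EReal) *
          shareVal g T (fun s (_ : ι) ω => ∑ b, Ha s b ω) (T - t - 1) a₀ ω' := by
      filter_upwards [hagg, hsumpos h fun c => (hp c).2] with ω e1 e2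
      exact mul_le_mul_of_nonneg_left e1 (by exact_mod_cast inv_nonneg.2 e2.le)
    have hg2 := hgmono t ht _ _ hy1 hy2 hle2
    have hunfold : ∀ b, shareVal g T w (T - t - 1 + 1) b = fun ω =>
        ((w t b ω : ℝ) : EReal) * g t
          (fun ω' => (((w t b ω')⁻¹ : ℝ) : EReal) * shareVal g T w (T - t - 1) b ω') ω := by
      intro b
      have e : shareVal g T w (T - t - 1 + 1) b = fun ω =>
          ((w (T - (T - t - 1 + 1)) b ω : ℝ) : EReal) * g (T - (T - t - 1 + 1))
            (fun ω' => (((w (T - (T - t - 1 + 1)) b ω')⁻¹ : ℝ) : EReal) *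
              shareVal g T w (T - t - 1) b ω') ω := rfl
      rwa [hidx] at e
    have hwt : ∀ b (ω : Ω), w t b ω = h b ω := by
      intro b ω
      simp only [hw, eq_self_iff_true, if_true]
    filter_upwards [hjen, hg2, hsumpos h fun c => (hp c).2] with ω e1 e2 e3
    conv_lhs => rw [hk]
    have hsumeq : ∑ a, shareVal g T w (T - t - 1 + 1) a ω =
        ∑ a, ((h a ω : ℝ) : EReal) * g t
          (fun ω' => (((h a ω')⁻¹ : ℝ) : EReal) * shareVal g T w (T - t - 1) a ω') ω := by
      refine Finset.sum_congr rfl fun b _ => ?_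
      simp only [hunfold, hwt]
    rw [hsumeq]
    refine le_trans e1 ?_
    exact mul_le_mul_of_nonneg_left e2 (by exact_mod_cast e3.le)
  -- closed form for t < T
  have hclosedlt : ∀ t, t < T → ∀ h : ι → Ω → ℝ,
      (∀ a, Measurable[F t] (h a) ∧ ∀ᵐ ω ∂μ, 0 < h a ω) →
      Y t h =ᵐ[μ] fun ω => ((∑ b, h b ω : ℝ) : EReal) *
        g t (fun ω' => (((∑ c, h c ω')⁻¹ : ℝ) : EReal) *
          shareVal g T (fun s (_ : ι) ω => ∑ b, Ha s b ω) (T - t - 1) a₀ ω') ω := by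
    intro t ht h hp
    obtain ⟨hm, hge, hlub⟩ := hY t ht.le h hp
    have hsmeas : Measurable[F t] fun ω => ∑ b, h b ω :=
      Finset.measurable_sum _ fun c _ => (hp c).1
    have hargIn : InLbar μ (F (t + 1)) fun ω' => (((∑ c, h c ω')⁻¹ : ℝ) : EReal) *
        shareVal g T (fun s (_ : ι) ω => ∑ b, Ha s b ω) (T - t - 1) a₀ ω' := by
      refine ⟨er_measurable_coe_mul (hsmeas.inv.mono (hFmono (Nat.le_succ t)) le_rfl)
        (hVIn t ht).1, ?_⟩
      filter_upwards [(hVIn t ht).2, hsumpos h fun c => (hp c).2] with ω e1 e2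
      exact lt_top_iff_ne_top.2 (er_coe_mul_ne_top' (inv_nonneg.2 e2.le) e1.ne)
    have hPmeas : Measurable[F t] fun ω => ((∑ b, h b ω : ℝ) : EReal) *
        g t (fun ω' => (((∑ c, h c ω')⁻¹ : ℝ) : EReal) *
          shareVal g T (fun s (_ : ι) ω => ∑ b, Ha s b ω) (T - t - 1) a₀ ω') ω :=
      er_measurable_coe_mul hsmeas (hgL t ht _ hargIn).1
    have h1 := hlub _ hPmeas fun x hx => hub t ht h hp x hx
    filter_upwards [h1, hge _ (hallocP t ht.le h hp), hPhiSum t ht h hp] with ω e1 e2 e3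
    refine le_antisymm e1 ?_
    rw [← e3]
    exact e2
  -- InLbar of the closed-form argument, for any positive h
  have hargIn : ∀ t, t < T → ∀ h : ι → Ω → ℝ,
      (∀ a, Measurable[F t] (h a) ∧ ∀ᵐ ω ∂μ, 0 < h a ω) →
      InLbar μ (F (t + 1)) fun ω' => (((∑ c, h c ω')⁻¹ : ℝ) : EReal) *
        shareVal g T (fun s (_ : ι) ω => ∑ b, Ha s b ω) (T - t - 1) a₀ ω' := by
    intro t ht h hp
    refine ⟨er_measurable_coe_mul (((Finset.measurable_sum _ fun c _ => (hp c).1).inv).mono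
      (hFmono (Nat.le_succ t)) le_rfl) (hVIn t ht).1, ?_⟩
    filter_upwards [(hVIn t ht).2, hsumpos h fun c => (hp c).2] with ω e1 e2
    exact lt_top_iff_ne_top.2 (er_coe_mul_ne_top' (inv_nonneg.2 e2.le) e1.ne)
  refine ⟨?_, ?_, ?_, ?_⟩
  · -- part 1: the proportional allocation is feasible and optimal
    intro t htT
    have hp := hHa t htT
    refine ⟨hallocP t htT (Ha t) hp, ?_⟩
    rcases htT.lt_or_eq with hlt | rfl
    · have e1 := hclosedlt t hlt (Ha t) hp
      have e2 := hPhiSum t hlt (Ha t) hp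
      have hweq : (fun s a (ω' : Ω) => if s = t then Ha t a ω' else
          Ha t a ω' / (∑ b, Ha t b ω') * ∑ b, Ha s b ω') =
          fun s b => if s = t then Ha t b else
            fun ω => Ha t b ω / (∑ c, Ha t c ω) * ∑ c, Ha s c ω := by
        funext s b ω'
        by_cases hst : s = t <;> simp [hst]
      rw [hweq]
      exact e1.trans e2.symm
    · have e1 := hclosedT (Ha t) hp
      have e2 : (fun ω => ∑ a, shareVal g t (fun s a ω' => if s = t then Ha t a ω' else
          Ha t a ω' / (∑ b, Ha t b ω') * ∑ b, Ha s b ω') (t - t) a ω) =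
          fun ω => ((∑ b, Ha t b ω : ℝ) : EReal) := by
        funext ω
        rw [Nat.sub_self]
        show ∑ a, (((if t = t then Ha t a ω else
          Ha t a ω / (∑ b, Ha t b ω) * ∑ b, Ha t b ω) : ℝ) : EReal) = _
        simp only [eq_self_iff_true, if_true]
        exact (er_coe_finset_sum _ _).symm
      rw [e2]
      exact e1
  · -- part 2: stability
    intro t htT A hA hk h₀ hkpos h0pos hagree k
    rcases htT.lt_or_eq with hlt | rfl
    · have e0 := hclosedlt t hlt h₀ h0pos
      have ek := hclosedlt t hlt (hk k) (hkpos k)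
      have hIn0 := hargIn t hlt h₀ h0pos
      have hInk := hargIn t hlt (hk k) (hkpos k)
      have heqB : ∀ᵐ ω ∂μ, ω ∈ A k →
          (((∑ c, h₀ c ω)⁻¹ : ℝ) : EReal) * shareVal g T (fun s (_ : ι) ω => ∑ b, Ha s b ω) (T - t - 1) a₀ ω =
          (((∑ c, hk k c ω)⁻¹ : ℝ) : EReal) * shareVal g T (fun s (_ : ι) ω => ∑ b, Ha s b ω) (T - t - 1) a₀ ω := by
        filter_upwards [hagree k] with ω e hmem
        rw [show ∑ c, h₀ c ω = ∑ c, hk k c ω from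
          Finset.sum_congr rfl fun c _ => e hmem c]
      have heqB' : ∀ᵐ ω ∂μ, ω ∈ A k →
          (((∑ c, hk k c ω)⁻¹ : ℝ) : EReal) * shareVal g T (fun s (_ : ι) ω => ∑ b, Ha s b ω) (T - t - 1) a₀ ω =
          (((∑ c, h₀ c ω)⁻¹ : ℝ) : EReal) * shareVal g T (fun s (_ : ι) ω => ∑ b, Ha s b ω) (T - t - 1) a₀ ω := by
        filter_upwards [heqB] with ω e hmem
        exact (e hmem).symm
      have l1 := g_local hgae hgconc hlt (hA.1 k) hIn0 hInk heqB
      have l2 := g_local hgae hgconc hlt (hA.1 k) hInk hIn0 heqB'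
      filter_upwards [e0, ek, hagree k, l1, l2] with ω f0 fk fe g1 g2 hmem
      rw [f0, fk, show ∑ b, h₀ b ω = ∑ b, hk k b ω from
        Finset.sum_congr rfl fun b _ => fe hmem b,
        le_antisymm (g1 hmem) (g2 hmem)]
    · filter_upwards [hclosedT h₀ h0pos, hclosedT (hk k) (hkpos k), hagree k]
        with ω f0 fk fe hmem
      rw [f0, fk]
      exact congrArg Real.toEReal (Finset.sum_congr rfl fun b _ => fe hmem b)
  · -- part 3: monotonicity
    intro t htT h h' hp hp' hle
    have hql : ∀ᵐ ω ∂μ, ∑ b, h b ω ≤ ∑ b, h' b ω := by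
      filter_upwards [ae_finset (μ := μ) Finset.univ (fun b ω => h b ω ≤ h' b ω)
        fun b _ => hle b] with ω e
      exact Finset.sum_le_sum fun b hb => e b hb
    rcases htT.lt_or_eq with hlt | rfl
    · have e := hclosedlt t hlt h hp
      have e' := hclosedlt t hlt h' hp'
      have hm := perspective_mono hgae hgconc hg0 hFmono hlt
        (Finset.measurable_sum _ fun c _ => (hp c).1)
        (Finset.measurable_sum _ fun c _ => (hp' c).1)
        (hsumpos h fun c => (hp c).2) (hsumpos h' fun c => (hp' c).2) hql (hVIn t hlt)
      filter_upwards [e, e', hm] with ω f1 f2 f3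
      rw [f1, f2]
      exact f3
    · filter_upwards [hclosedT h hp, hclosedT h' hp', hql] with ω f1 f2 f3
      rw [f1, f2]
      exact_mod_cast f3
  · -- part 4: sequential upper semi-continuity
    intro t htT hk h₀ hkpos h0pos htend
    have hsumtend : ∀ᵐ ω ∂μ, Tendsto (fun k => ∑ c, hk k c ω) atTop
        (nhds (∑ c, h₀ c ω)) := by
      filter_upwards [ae_finset (μ := μ) Finset.univ
        (fun c ω => Tendsto (fun k => hk k c ω) atTop (nhds (h₀ c ω)))
        fun c _ => htend c] with ω e
      exact tendsto_finset_sum _ fun c hc => e c hc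
    have hposall : ∀ᵐ ω ∂μ, ∀ k, 0 < ∑ c, hk k c ω :=
      ae_all_iff.2 fun k => hsumpos (hk k) fun c => (hkpos k c).2
    rcases htT.lt_or_eq with hlt | rfl
    · have e0 := hclosedlt t hlt h₀ h0pos
      have hall : ∀ᵐ ω ∂μ, ∀ k, Y t (hk k) ω =
          ((∑ b, hk k b ω : ℝ) : EReal) * g t (fun ω' => (((∑ c, hk k c ω')⁻¹ : ℝ) : EReal) *
            shareVal g T (fun s (_ : ι) ω => ∑ b, Ha s b ω) (T - t - 1) a₀ ω') ω :=
        ae_all_iff.2 fun k => hclosedlt t hlt (hk k) (hkpos k)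
      have hargtend : ∀ᵐ ω ∂μ, Tendsto
          (fun k => (((∑ c, hk k c ω)⁻¹ : ℝ) : EReal) * shareVal g T (fun s (_ : ι) ω => ∑ b, Ha s b ω) (T - t - 1) a₀ ω) atTop
          (nhds ((((∑ c, h₀ c ω)⁻¹ : ℝ) : EReal) * shareVal g T (fun s (_ : ι) ω => ∑ b, Ha s b ω) (T - t - 1) a₀ ω)) := by
        filter_upwards [hsumtend, hposall, hsumpos h₀ fun c => (h0pos c).2,
          (hVIn t hlt).2] with ω e1 e2 e3 e4
        exact er_tendsto_coe_mul (e1.inv₀ e3.ne') (fun k => inv_pos.2 (e2 k))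
          (inv_pos.2 e3) e4.ne
      have husc := hgusc t hlt _ _ (fun k => hargIn t hlt (hk k) (hkpos k))
        (hargIn t hlt h₀ h0pos) hargtend
      filter_upwards [hall, e0, husc, hsumtend, hposall,
        hsumpos h₀ fun c => (h0pos c).2] with ω f1 f2 f3 f4 f5 f6
      rw [f2, show (fun k => Y t (hk k) ω) = fun k => ((∑ b, hk k b ω : ℝ) : EReal) *
        g t (fun ω' => (((∑ c, hk k c ω')⁻¹ : ℝ) : EReal) * shareVal g T (fun s (_ : ι) ω => ∑ b, Ha s b ω) (T - t - 1) a₀ ω') ω from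
        funext fun k => f1 k]
      exact er_limsup_coe_mul_le f4 f6 f5 f3
    · have hall : ∀ᵐ ω ∂μ, ∀ k, Y t (hk k) ω = ((∑ b, hk k b ω : ℝ) : EReal) :=
        ae_all_iff.2 fun k => hclosedT (hk k) (hkpos k)
      filter_upwards [hall, hclosedT h₀ h0pos, hsumtend] with ω f1 f2 f3
      rw [f2, show (fun k => Y t (hk k) ω) = fun k => ((∑ b, hk k b ω : ℝ) : EReal) from
        funext fun k => f1 k]
      exact le_of_eq (Tendsto.limsup_eq (EReal.tendsto_coe.2 f3))



end CondPaper
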